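/- arXiv:1204.5456 — 3 statements merged into one kernel-verified Lean document; each statement's English description precedes it below -/
import Mathlib

section
/- Let k ≥ 2 be an integer and let ε be a real number with k − 1 < 1/ε < k, and set p(n) := n^{−1+ε}. Then, as n → ∞, the probability that the two vertices 0 and 1 of Fin n are joined in G(n, p(n)) by a path of length at most k − 1 tends to 0. (Consequently, with probability tending to 1, the diameter of G(n,p(n)) is at least k, where a disconnected graph has infinite diameter.) -/
open MeasureTheory

/-- The Bernoulli measure on `Bool` with parameter `p`: `true` with probability `p`,
`false` with probability `1 - p`. -/
noncomputable def bernoulliMeasure (p : ℝ) : Measure Bool :=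
  ENNReal.ofReal p • Measure.dirac true + ENNReal.ofReal (1 - p) • Measure.dirac false

/-- Unordered pairs of distinct vertices of `Fin n`. -/
abbrev EdgeIdx (n : ℕ) := {e : Sym2 (Fin n) // ¬ e.IsDiag}

/-- Independent Bernoulli(p) indicators, one for each unordered pair of distinct vertices. -/
noncomputable def edgeMeasure (n : ℕ) (p : ℝ) : Measure (EdgeIdx n → Bool) :=
  Measure.pi fun _ => bernoulliMeasure p

/-- The simple graph determined by an edge-indicator function: the edges are exactly the
pairs with indicator `true`. -/
def graphOf {n : ℕ} (f : EdgeIdx n → Bool) : SimpleGraph (Fin n) where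
  Adj v w := v ≠ w ∧ ∀ e : EdgeIdx n, e.1 = s(v, w) → f e = true
  symm := by
    constructor
    rintro v w ⟨hvw, hf⟩
    exact ⟨hvw.symm, fun e he => hf e (he.trans Sym2.eq_swap)⟩
  loopless := ⟨fun v h => h.1 rfl⟩

instance (n : ℕ) : MeasurableSpace (SimpleGraph (Fin n)) := ⊤

/-- The Erdős–Rényi random graph measure `G(n, p)`: the pushforward of the product of
Bernoulli(p) measures under the map sending an indicator function to the corresponding graph. -/
noncomputable def erdosRenyi (n : ℕ) (p : ℝ) : Measure (SimpleGraph (Fin n)) :=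
  (edgeMeasure n p).map graphOf


/-- A path of length `l` between `a` and `b` in a graph `G`: a sequence
`a = γ₀, γ₁, …, γ_l = b` of pairwise distinct vertices in which consecutive vertices
are adjacent. -/
def IsPathBetween {V : Type*} (G : SimpleGraph V) (l : ℕ) (a b : V)
    (γ : Fin (l + 1) → V) : Prop :=
  γ 0 = a ∧ γ (Fin.last l) = b ∧ Function.Injective γ ∧
    ∀ i : Fin l, G.Adj (γ i.castSucc) (γ i.succ)

/-! ### Auxiliary lemmas -/

lemma bern_true (p : ℝ) : bernoulliMeasure p {true} = ENNReal.ofReal p := by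
  simp [bernoulliMeasure, Measure.dirac_apply']

lemma bern_prob (p : ℝ) (h0 : 0 ≤ p) (h1 : p ≤ 1) :
    IsProbabilityMeasure (bernoulliMeasure p) := by
  constructor
  simp [bernoulliMeasure]
  rw [← ENNReal.ofReal_add h0 (by linarith)]
  norm_num

lemma edgeMeasure_forall_true (n : ℕ) (p : ℝ) (h0 : 0 ≤ p) (h1 : p ≤ 1)
    (S : Finset (EdgeIdx n)) :
    edgeMeasure n p {f | ∀ e ∈ S, f e = true} = ENNReal.ofReal p ^ S.card := by
  classical
  haveI := bern_prob p h0 h1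
  have hset : {f : EdgeIdx n → Bool | ∀ e ∈ S, f e = true}
      = Set.pi Set.univ (fun e => if e ∈ S then {true} else Set.univ) := by
    ext f
    simp only [Set.mem_setOf_eq, Set.mem_pi, Set.mem_univ, forall_true_left]
    constructor
    · intro h e
      by_cases he : e ∈ S <;> simp [he, h e]
    · intro h e he
      have := h e
      simpa [he] using this
  rw [hset, edgeMeasure, Measure.pi_pi]
  have hval : ∀ e : EdgeIdx n, (bernoulliMeasure p) (if e ∈ S then {true} else Set.univ)
      = if e ∈ S then ENNReal.ofReal p else 1 := by
    intro e
    by_cases he : e ∈ S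
    · simp [he, bern_true]
    · rw [if_neg he, if_neg he]; exact measure_univ
  simp_rw [hval]
  rw [Finset.prod_ite_mem Finset.univ S (fun _ => ENNReal.ofReal p), Finset.univ_inter,
    Finset.prod_const]

lemma event_gamma_bound (n : ℕ) (p : ℝ) (h0 : 0 ≤ p) (h1 : p ≤ 1)
    (l : ℕ) (a b : Fin n) (γ : Fin (l + 1) → Fin n) (hγ : Function.Injective γ) :
    edgeMeasure n p {f | IsPathBetween (graphOf f) l a b γ} ≤ ENNReal.ofReal p ^ l := by
  classical
  have hne : ∀ i : Fin l, γ i.castSucc ≠ γ i.succ := by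
    intro i h
    exact (Fin.castSucc_lt_succ : i.castSucc < i.succ).ne (hγ h)
  set E : Fin l → EdgeIdx n := fun i =>
    ⟨s(γ i.castSucc, γ i.succ), by simp [Sym2.mk_isDiag_iff, hne i]⟩ with hE
  have hEinj : Function.Injective E := by
    intro i j hij
    have h2 : s(γ i.castSucc, γ i.succ) = s(γ j.castSucc, γ j.succ) := congrArg Subtype.val hij
    rw [Sym2.eq_iff] at h2
    rcases h2 with ⟨h3, h4⟩ | ⟨h3, h4⟩
    · exact Fin.castSucc_injective _ (hγ h3)
    · have e1 := hγ h3; have e2 := hγ h4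
      have : i.val = j.val + 1 := by
        simpa [Fin.ext_iff] using e1
      have : i.val + 1 = j.val := by
        simpa [Fin.ext_iff] using e2
      omega
  set S : Finset (EdgeIdx n) := Finset.image E Finset.univ with hS
  have hsub : {f : EdgeIdx n → Bool | IsPathBetween (graphOf f) l a b γ}
      ⊆ {f | ∀ e ∈ S, f e = true} := by
    intro f hf e he
    obtain ⟨i, -, rfl⟩ := Finset.mem_image.mp he
    have hadj : γ i.castSucc ≠ γ i.succ ∧ ∀ e : EdgeIdx n, e.1 = s(γ i.castSucc, γ i.succ) → f e = true :=
      hf.2.2.2 i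
    exact hadj.2 (E i) rfl
  calc edgeMeasure n p {f | IsPathBetween (graphOf f) l a b γ}
      ≤ edgeMeasure n p {f | ∀ e ∈ S, f e = true} := measure_mono hsub
    _ = ENNReal.ofReal p ^ S.card := edgeMeasure_forall_true n p h0 h1 S
    _ = ENNReal.ofReal p ^ l := by
        rw [hS, Finset.card_image_of_injective _ hEinj, Finset.card_univ, Fintype.card_fin]

lemma event_l_bound (n : ℕ) (p : ℝ) (h0 : 0 ≤ p) (h1 : p ≤ 1)
    (l : ℕ) (hl : 1 ≤ l) (a b : Fin n) :
    edgeMeasure n p {f | ∃ γ : Fin (l + 1) → Fin n, IsPathBetween (graphOf f) l a b γ}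
      ≤ (n : ENNReal) ^ (l - 1) * ENNReal.ofReal p ^ l := by
  classical
  set T : Finset (Fin (l + 1) → Fin n) :=
    Finset.univ.filter (fun γ => γ 0 = a ∧ γ (Fin.last l) = b) with hT
  have hsub : {f : EdgeIdx n → Bool | ∃ γ, IsPathBetween (graphOf f) l a b γ}
      ⊆ ⋃ γ ∈ T, {f | IsPathBetween (graphOf f) l a b γ} := by
    intro f ⟨γ, hγ⟩
    refine Set.mem_biUnion ?_ hγ
    exact Finset.mem_filter.mpr ⟨Finset.mem_univ _, hγ.1, hγ.2.1⟩
  have hcard : T.card ≤ n ^ (l - 1) := by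
    have : T.card ≤ (Finset.univ : Finset (Fin (l - 1) → Fin n)).card := by
      apply Finset.card_le_card_of_injOn (fun γ j => γ ⟨j.val + 1, by omega⟩)
        (fun _ _ => Finset.mem_univ _)
      intro γ hγ γ' hγ' hres
      simp only [hT, Finset.mem_coe, Finset.mem_filter] at hγ hγ'
      funext i
      rcases Nat.lt_or_ge i.val 1 with hi | hi
      · have : i = 0 := Fin.ext (by simp only [Fin.val_zero]; omega)
        rw [this, hγ.2.1, hγ'.2.1]
      · rcases Nat.lt_or_ge i.val l with hi2 | hi2
        · have hj : i = ⟨(i.val - 1) + 1, by omega⟩ := Fin.ext (by simp; omega)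
          rw [hj]
          exact congrFun hres ⟨i.val - 1, by omega⟩
        · have : i = Fin.last l := Fin.ext (by simp; omega)
          rw [this, hγ.2.2, hγ'.2.2]
    simpa [Finset.card_univ, Fintype.card_fun] using this
  calc edgeMeasure n p {f | ∃ γ, IsPathBetween (graphOf f) l a b γ}
      ≤ ∑ γ ∈ T, edgeMeasure n p {f | IsPathBetween (graphOf f) l a b γ} :=
        (measure_mono hsub).trans (measure_biUnion_finset_le T _)
    _ ≤ ∑ γ ∈ T, ENNReal.ofReal p ^ l := by
        apply Finset.sum_le_sum
        intro γ hγT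
        by_cases hinj : Function.Injective γ
        · exact event_gamma_bound n p h0 h1 l a b γ hinj
        · have : {f : EdgeIdx n → Bool | IsPathBetween (graphOf f) l a b γ} = ∅ := by
            ext f; simp only [Set.mem_setOf_eq, Set.mem_empty_iff_false, iff_false]
            intro hf; exact hinj hf.2.2.1
          simp [this]
    _ = T.card * ENNReal.ofReal p ^ l := by rw [Finset.sum_const, nsmul_eq_mul]
    _ ≤ (n : ENNReal) ^ (l - 1) * ENNReal.ofReal p ^ l := by
        gcongr
        exact_mod_cast hcard

lemma getVert_inj {V : Type*} {G : SimpleGraph V} {u v : V} (q : G.Walk u v)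
    (hq : q.IsPath) : ∀ i ≤ q.length, ∀ j ≤ q.length,
      q.getVert i = q.getVert j → i = j := by
  induction q with
  | nil => intro i hi j hj _; simp [SimpleGraph.Walk.length_nil] at hi hj; omega
  | cons h p ih =>
    rw [SimpleGraph.Walk.cons_isPath_iff] at hq
    intro i hi j hj hij
    match i, j with
    | 0, 0 => rfl
    | 0, (j+1) =>
      exfalso
      apply hq.2
      rw [SimpleGraph.Walk.mem_support_iff_exists_getVert]
      refine ⟨j, ?_, by simpa using hj⟩
      simpa [SimpleGraph.Walk.getVert_cons_succ] using hij.symm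
    | (i+1), 0 =>
      exfalso
      apply hq.2
      rw [SimpleGraph.Walk.mem_support_iff_exists_getVert]
      refine ⟨i, ?_, by simpa using hi⟩
      simpa [SimpleGraph.Walk.getVert_cons_succ] using hij
    | (i+1), (j+1) =>
      have := ih hq.1 i (by simpa using hi) j (by simpa using hj)
        (by simpa [SimpleGraph.Walk.getVert_cons_succ] using hij)
      omega

lemma path_of_edist_le {V : Type*} {G : SimpleGraph V} {u v : V} {m : ℕ}
    (h : G.edist u v ≤ (m : ℕ∞)) :
    ∃ l ≤ m, ∃ γ : Fin (l + 1) → V, IsPathBetween G l u v γ := by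
  classical
  have hne : G.edist u v ≠ ⊤ := by
    intro ht; rw [ht] at h
    exact absurd h (by simp)
  obtain ⟨w, hw⟩ := SimpleGraph.exists_walk_of_edist_ne_top hne
  set q := w.bypass with hqdef
  have hqp : q.IsPath := w.bypass_isPath
  have hlen : (q.length : ℕ∞) ≤ (m : ℕ∞) := by
    calc (q.length : ℕ∞) ≤ (w.length : ℕ∞) := by exact_mod_cast w.length_bypass_le
    _ = G.edist u v := hw
    _ ≤ m := h
  have hlm : q.length ≤ m := by exact_mod_cast hlen
  refine ⟨q.length, hlm, fun i => q.getVert i.val, ?_, ?_, ?_, ?_⟩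
  · simp [SimpleGraph.Walk.getVert_zero]
  · simp [SimpleGraph.Walk.getVert_length]
  · intro i j hij
    exact Fin.ext (getVert_inj q hqp i.val (Nat.lt_succ_iff.mp i.isLt)
      j.val (Nat.lt_succ_iff.mp j.isLt) hij)
  · intro i
    simpa using q.adj_getVert_succ i.isLt

/-- With `k ≥ 2`, `k − 1 < 1/ε < k` and `p(n) = n^(−1+ε)`, the probability that the two
vertices `0` and `1` are joined in `G(n, p(n))` by a path of length at most `k − 1` tends
to `0` as `n → ∞`; consequently, with probability tending to `1`, the diameter of
`G(n, p(n))` is at least `k` (where a disconnected graph has infinite diameter). -/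
theorem no_short_path_and_diam_ge
    (k : ℕ) (hk : 2 ≤ k) (ε : ℝ) (h1 : (k : ℝ) - 1 < 1 / ε) (h2 : 1 / ε < k) :
    Filter.Tendsto
      (fun n : ℕ => erdosRenyi (n + 2) (((n + 2 : ℕ) : ℝ) ^ (-1 + ε))
        {G | ∃ l ≤ k - 1, ∃ γ : Fin (l + 1) → Fin (n + 2), IsPathBetween G l 0 1 γ})
      Filter.atTop (nhds 0)
    ∧ Filter.Tendsto
      (fun n : ℕ => erdosRenyi (n + 2) (((n + 2 : ℕ) : ℝ) ^ (-1 + ε))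
        {G | (k : ℕ∞) ≤ G.ediam})
      Filter.atTop (nhds 1) := by
  classical
  -- basic facts about ε
  have hε : 0 < ε := by
    rcases lt_trichotomy ε 0 with h | h | h
    · exfalso; have : 1 / ε < 0 := by exact div_neg_of_pos_of_neg one_pos h
      have hk1 : (1 : ℝ) ≤ (k : ℝ) - 1 := by
        have : (2 : ℝ) ≤ (k : ℝ) := by exact_mod_cast hk
        linarith
      linarith
    · exfalso; rw [h] at h1; simp at h1
      have hk1 : (1 : ℝ) ≤ (k : ℝ) - 1 := by
        have : (2 : ℝ) ≤ (k : ℝ) := by exact_mod_cast hk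
        linarith
      linarith
    · exact h
  have hk1 : (1 : ℝ) ≤ (k : ℝ) - 1 := by
    have : (2 : ℝ) ≤ (k : ℝ) := by exact_mod_cast hk
    linarith
  have hinv : ε * (1 / ε) = 1 := by field_simp
  have hεk : ε * ((k : ℝ) - 1) < 1 := by
    have := mul_lt_mul_of_pos_left h1 hε
    rwa [hinv] at this
  have hε1 : ε < 1 := by
    have := mul_lt_mul_of_pos_left (lt_of_le_of_lt hk1 h1) hε
    rwa [hinv, mul_one] at this
  set pfun : ℕ → ℝ := fun n => ((n + 2 : ℕ) : ℝ) ^ (-1 + ε) with hpfun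
  have hx1 : ∀ n : ℕ, (1 : ℝ) ≤ ((n + 2 : ℕ) : ℝ) := by
    intro n; exact_mod_cast Nat.le_add_left 1 (n + 1)
  have hp0 : ∀ n, 0 ≤ pfun n := fun n => Real.rpow_nonneg (by positivity) _
  have hp1 : ∀ n, pfun n ≤ 1 := fun n =>
    Real.rpow_le_one_of_one_le_of_nonpos (hx1 n) (by linarith)
  have hmap : ∀ (n : ℕ) (A : Set (SimpleGraph (Fin (n + 2)))),
      erdosRenyi (n + 2) (pfun n) A = edgeMeasure (n + 2) (pfun n) (graphOf ⁻¹' A) := by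
    intro n A
    exact Measure.map_apply (measurable_of_countable _) MeasurableSpace.measurableSet_top
  -- the dominating sequence
  set g : ℕ → ENNReal := fun n => ∑ l ∈ Finset.Icc 1 (k - 1),
    ((n + 2 : ℕ) : ENNReal) ^ (l - 1) * ENNReal.ofReal (pfun n) ^ l with hg
  have hbound : ∀ n : ℕ, erdosRenyi (n + 2) (pfun n)
      {G | ∃ l ≤ k - 1, ∃ γ : Fin (l + 1) → Fin (n + 2), IsPathBetween G l 0 1 γ} ≤ g n := by
    intro n
    rw [hmap]
    have h01 : (0 : Fin (n + 2)) ≠ 1 := by simp [Fin.ext_iff]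
    have hsub : graphOf ⁻¹' {G : SimpleGraph (Fin (n + 2)) |
          ∃ l ≤ k - 1, ∃ γ : Fin (l + 1) → Fin (n + 2), IsPathBetween G l 0 1 γ}
        ⊆ ⋃ l ∈ Finset.Icc 1 (k - 1),
            {f | ∃ γ : Fin (l + 1) → Fin (n + 2), IsPathBetween (graphOf f) l 0 1 γ} := by
      intro f hf
      obtain ⟨l, hl, γ, hγ⟩ := hf
      have hl1 : 1 ≤ l := by
        rcases Nat.eq_zero_or_pos l with rfl | h
        · exact absurd (hγ.1.symm.trans hγ.2.1) h01
        · exact h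
      exact Set.mem_biUnion (Finset.mem_Icc.mpr ⟨hl1, hl⟩) ⟨γ, hγ⟩
    calc edgeMeasure (n + 2) (pfun n) _ ≤ _ := (measure_mono hsub).trans
          (measure_biUnion_finset_le _ _)
      _ ≤ g n := by
          apply Finset.sum_le_sum
          intro l hl
          exact event_l_bound (n + 2) (pfun n) (hp0 n) (hp1 n) l
            (Finset.mem_Icc.mp hl).1 0 1
  have hgto : Filter.Tendsto g Filter.atTop (nhds 0) := by
    rw [hg, show (0 : ENNReal) = ∑ l ∈ Finset.Icc 1 (k - 1), 0 by simp]
    apply tendsto_finset_sum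
    intro l hl
    obtain ⟨hl1, hl2⟩ := Finset.mem_Icc.mp hl
    have hterm : ∀ n : ℕ, ((n + 2 : ℕ) : ENNReal) ^ (l - 1) * ENNReal.ofReal (pfun n) ^ l
        = ENNReal.ofReal (((n + 2 : ℕ) : ℝ) ^ (ε * l - 1)) := by
      intro n
      have hx0 : (0 : ℝ) < ((n + 2 : ℕ) : ℝ) := by positivity
      rw [← ENNReal.ofReal_natCast (n + 2), ← ENNReal.ofReal_pow (by positivity),
        ← ENNReal.ofReal_pow (hp0 n), ← ENNReal.ofReal_mul (by positivity)]
      congr 1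
      rw [hpfun]
      rw [← Real.rpow_natCast ((n + 2 : ℕ) : ℝ) (l - 1),
        ← Real.rpow_natCast (((n + 2 : ℕ) : ℝ) ^ (-1 + ε)) l,
        ← Real.rpow_mul hx0.le, ← Real.rpow_add hx0]
      congr 1
      push_cast [Nat.cast_sub hl1]
      ring
    simp only [hterm]
    have hc : ε * l - 1 < 0 := by
      have hlk : (l : ℝ) ≤ (k : ℝ) - 1 := by
        have h' : (l : ℝ) ≤ ((k - 1 : ℕ) : ℝ) := by exact_mod_cast hl2
        rw [Nat.cast_sub (by omega : 1 ≤ k)] at h'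
        simpa using h'
      have := mul_le_mul_of_nonneg_left hlk hε.le
      linarith
    have hxx : Filter.Tendsto (fun n : ℕ => ((n + 2 : ℕ) : ℝ)) Filter.atTop Filter.atTop := by
      exact tendsto_natCast_atTop_atTop.comp (Filter.tendsto_add_atTop_nat 2)
    have hreal : Filter.Tendsto (fun n : ℕ => ((n + 2 : ℕ) : ℝ) ^ (ε * l - 1))
        Filter.atTop (nhds 0) := by
      have := (tendsto_rpow_neg_atTop (by linarith : (0 : ℝ) < 1 - ε * l)).comp hxx
      simpa [Function.comp_def, neg_sub] using this
    simpa using ENNReal.tendsto_ofReal hreal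
  have part1 : Filter.Tendsto
      (fun n : ℕ => erdosRenyi (n + 2) (pfun n)
        {G | ∃ l ≤ k - 1, ∃ γ : Fin (l + 1) → Fin (n + 2), IsPathBetween G l 0 1 γ})
      Filter.atTop (nhds 0) :=
    tendsto_of_tendsto_of_tendsto_of_le_of_le tendsto_const_nhds hgto
      (fun n => zero_le) hbound
  refine ⟨part1, ?_⟩
  -- probability measure instances
  have hprob : ∀ n : ℕ, IsProbabilityMeasure (erdosRenyi (n + 2) (pfun n)) := by
    intro n
    haveI := bern_prob (pfun n) (hp0 n) (hp1 n)
    haveI : IsProbabilityMeasure (edgeMeasure (n + 2) (pfun n)) := by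
      unfold edgeMeasure; infer_instance
    exact Measure.isProbabilityMeasure_map (measurable_of_countable _).aemeasurable
  have hsub2 : ∀ n : ℕ, {G : SimpleGraph (Fin (n + 2)) |
        ∃ l ≤ k - 1, ∃ γ : Fin (l + 1) → Fin (n + 2), IsPathBetween G l 0 1 γ}ᶜ
      ⊆ {G | (k : ℕ∞) ≤ G.ediam} := by
    intro n G hG
    by_contra hlt
    rw [Set.mem_setOf_eq, not_le] at hlt
    have h01 : G.edist 0 1 < (k : ℕ∞) := lt_of_le_of_lt SimpleGraph.edist_le_ediam hlt
    obtain ⟨m, hm⟩ := WithTop.ne_top_iff_exists.mp (ne_top_of_lt h01)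
    have hm' : (m : ℕ∞) = G.edist 0 1 := hm
    have hmk : m < k := by
      rw [← hm'] at h01; exact ENat.coe_lt_coe.mp h01
    have hle : G.edist 0 1 ≤ ((k - 1 : ℕ) : ℕ∞) := by
      rw [← hm']; exact ENat.coe_le_coe.mpr (by omega)
    obtain ⟨l, hl, γ, hγ⟩ := path_of_edist_le hle
    exact hG ⟨l, hl, γ, hγ⟩
  have hlow : ∀ n : ℕ, 1 - erdosRenyi (n + 2) (pfun n)
      {G | ∃ l ≤ k - 1, ∃ γ : Fin (l + 1) → Fin (n + 2), IsPathBetween G l 0 1 γ}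
      ≤ erdosRenyi (n + 2) (pfun n) {G | (k : ℕ∞) ≤ G.ediam} := by
    intro n
    haveI := hprob n
    rw [← prob_compl_eq_one_sub MeasurableSpace.measurableSet_top]
    exact measure_mono (hsub2 n)
  have hlowto : Filter.Tendsto (fun n : ℕ => 1 - erdosRenyi (n + 2) (pfun n)
      {G | ∃ l ≤ k - 1, ∃ γ : Fin (l + 1) → Fin (n + 2), IsPathBetween G l 0 1 γ})
      Filter.atTop (nhds 1) := by
    have := ENNReal.Tendsto.sub (tendsto_const_nhds (x := (1 : ENNReal))) part1
      (Or.inl ENNReal.one_ne_top)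
    simpa using this
  exact tendsto_of_tendsto_of_tendsto_of_le_of_le hlowto tendsto_const_nhds hlow
    (fun n => by haveI := hprob n; exact prob_le_one)
end

section
/- Let k ≥ 2 and 1 ≤ l ≤ k − 1 be integers. There is a constant C = C(k, l) > 0 such that for every n and every pair of distinct vertices a, b ∈ Fin n, the number of ordered pairs (P₁, P₂) of paths of length k between a and b in the complete graph on Fin n whose edge sets have exactly l edges in common is at most C · n^{2k−2−l}. -/
/-- The edge set of a path `γ₀, …, γ_k`: the unordered pairs `{γ_{i−1}, γ_i}`. -/
def pathEdges {V : Type*} {k : ℕ} (γ : Fin (k + 1) → V) : Set (Sym2 V) :=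
  {e | ∃ i : Fin k, e = s(γ i.castSucc, γ i.succ)}

lemma coveredNat (k l : ℕ) (hlk : l < k) (E : Finset ℕ)
    (hE : E ⊆ Finset.range k) (hcard : E.card = l) :
    l ≤ ((Finset.Icc 1 (k-1)).filter (fun j => j ∈ E ∨ j - 1 ∈ E)).card := by
  classical
  by_cases h0 : 0 ∈ E
  · have hne : (Finset.range k \ E).Nonempty := by
      rw [Finset.sdiff_nonempty]
      intro hsub
      have := Finset.card_le_card hsub
      rw [Finset.card_range, hcard] at this
      omega
    set m := (Finset.range k \ E).min' hne with hm
    have hmmem := Finset.min'_mem (Finset.range k \ E) hne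
    rw [← hm, Finset.mem_sdiff, Finset.mem_range] at hmmem
    have hm1 : 1 ≤ m := by
      rcases Nat.eq_zero_or_pos m with h | h
      · exact absurd h0 (h ▸ hmmem.2)
      · exact h
    have hmE : m - 1 ∈ E := by
      by_contra hc
      have hin : m - 1 ∈ Finset.range k \ E := by
        rw [Finset.mem_sdiff, Finset.mem_range]; exact ⟨by omega, hc⟩
      have := Finset.min'_le _ _ hin
      omega
    have hsub : insert m (E.erase 0) ⊆
        (Finset.Icc 1 (k-1)).filter (fun j => j ∈ E ∨ j - 1 ∈ E) := by
      intro x hx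
      rw [Finset.mem_insert] at hx
      rw [Finset.mem_filter, Finset.mem_Icc]
      rcases hx with rfl | hx
      · exact ⟨⟨hm1, by omega⟩, Or.inr hmE⟩
      · rw [Finset.mem_erase] at hx
        have hxk : x < k := Finset.mem_range.mp (hE hx.2)
        exact ⟨⟨by omega, by omega⟩, Or.inl hx.2⟩
    have hle := Finset.card_le_card hsub
    have hnm : m ∉ E.erase 0 := fun hc => hmmem.2 (Finset.mem_of_mem_erase hc)
    rw [Finset.card_insert_of_notMem hnm, Finset.card_erase_of_mem h0, hcard] at hle
    have hl1 : 1 ≤ l := by rw [← hcard]; exact Finset.card_pos.mpr ⟨0, h0⟩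
    omega
  · have hsub : E ⊆ (Finset.Icc 1 (k-1)).filter (fun j => j ∈ E ∨ j - 1 ∈ E) := by
      intro x hx
      have hxk : x < k := Finset.mem_range.mp (hE hx)
      have hx0 : x ≠ 0 := fun h => h0 (h ▸ hx)
      rw [Finset.mem_filter, Finset.mem_Icc]
      exact ⟨⟨by omega, by omega⟩, Or.inl hx⟩
    have := Finset.card_le_card hsub
    omega


open Finset in
/-- Let `k ≥ 2` and `1 ≤ l ≤ k − 1`. There is a constant `C = C(k, l) > 0` such that for
every `n` and all distinct `a, b : Fin n`, the number of ordered pairs `(P₁, P₂)` of paths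
of length `k` between `a` and `b` in the complete graph on `Fin n` whose edge sets have
exactly `l` edges in common is at most `C · n^(2k−2−l)`. -/
theorem count_pairs_of_paths_sharing_edges
    (k l : ℕ) (hk : 2 ≤ k) (hl1 : 1 ≤ l) (hl2 : l ≤ k - 1) :
    ∃ C : ℝ, 0 < C ∧ ∀ n : ℕ, ∀ a b : Fin n, a ≠ b →
      (Set.ncard {P : (Fin (k + 1) → Fin n) × (Fin (k + 1) → Fin n) |
          IsPathBetween (⊤ : SimpleGraph (Fin n)) k a b P.1 ∧
          IsPathBetween (⊤ : SimpleGraph (Fin n)) k a b P.2 ∧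
          (pathEdges P.1 ∩ pathEdges P.2).ncard = l} : ℝ)
        ≤ C * (n : ℝ) ^ (2 * k - 2 - l) := by

  classical
  refine ⟨((2^(k+1) * (k+1)^(k+1) : ℕ) : ℝ), by positivity, ?_⟩
  intro n a b hab
  set S : Set ((Fin (k + 1) → Fin n) × (Fin (k + 1) → Fin n)) :=
    {P | IsPathBetween (⊤ : SimpleGraph (Fin n)) k a b P.1 ∧
         IsPathBetween (⊤ : SimpleGraph (Fin n)) k a b P.2 ∧
         (pathEdges P.1 ∩ pathEdges P.2).ncard = l} with hSdef
  have hSfin : S.Finite := Set.toFinite _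
  have key : S.ncard ≤ 2^(k+1) * (k+1)^(k+1) * n^(2*k-2-l) := by
    rw [Set.ncard_eq_toFinset_card S hSfin]
    set F := hSfin.toFinset with hF
    -- the encoding
    set Φ : ((Fin (k + 1) → Fin n) × (Fin (k + 1) → Fin n)) →
        ((Fin (k-1) → Fin n) × (Fin (k+1) → (Fin (k+1) ⊕ Fin n))) :=
      fun P => (fun i => P.1 ⟨i.val + 1, by omega⟩,
        fun j => if h : P.2 j ∈ Set.range P.1 then Sum.inl h.choose else Sum.inr (P.2 j))
      with hΦ
    set T : Finset ((Fin (k-1) → Fin n) × (Fin (k+1) → (Fin (k+1) ⊕ Fin n))) :=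
      univ.filter (fun p => l + 2 ≤ (univ.filter (fun j => (p.2 j).isLeft)).card) with hT
    have step1 : F.card ≤ T.card := by
      apply Finset.card_le_card_of_injOn Φ
      · -- maps into T
        intro P hP
        rw [Finset.mem_coe, hF, Set.Finite.mem_toFinset] at hP
        obtain ⟨⟨h10, h1l, h1inj, -⟩, ⟨h20, h2l, h2inj, -⟩, hshare⟩ := hP
        rw [Finset.mem_coe, hT, Finset.mem_filter]
        refine ⟨Finset.mem_univ _, ?_⟩
        have hDsub : (univ.filter (fun j : Fin (k+1) => P.2 j ∈ Set.range P.1)) ⊆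
            (univ.filter (fun j => ((Φ P).2 j).isLeft)) := by
          intro j hj
          rw [Finset.mem_filter] at hj ⊢
          refine ⟨Finset.mem_univ _, ?_⟩
          rw [hΦ]
          simp only [dif_pos hj.2]
          rfl
        refine le_trans ?_ (Finset.card_le_card hDsub)
        -- the combinatorial heart
        have hsym : Function.Injective
            (fun i : Fin k => s(P.2 i.castSucc, P.2 i.succ)) := by
          intro i j hij
          simp only [Sym2.eq_iff] at hij
          rcases hij with ⟨hc, -⟩ | ⟨hc1, hc2⟩
          · exact Fin.castSucc_injective k (h2inj hc)
          · have v1 := congrArg Fin.val (h2inj hc1)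
            have v2 := congrArg Fin.val (h2inj hc2)
            simp only [Fin.coe_castSucc, Fin.val_succ] at v1 v2
            omega
        set Epos : Finset (Fin k) :=
          univ.filter (fun i => s(P.2 i.castSucc, P.2 i.succ) ∈ pathEdges P.1) with hEpos
        have hend : ∀ i : Fin k, i ∈ Epos →
            P.2 i.castSucc ∈ Set.range P.1 ∧ P.2 i.succ ∈ Set.range P.1 := by
          intro i hi
          rw [hEpos, Finset.mem_filter] at hi
          obtain ⟨i', hi'⟩ := hi.2
          rw [Sym2.eq_iff] at hi'
          rcases hi' with ⟨hA, hB⟩ | ⟨hA, hB⟩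
          · exact ⟨⟨_, hA.symm⟩, ⟨_, hB.symm⟩⟩
          · exact ⟨⟨_, hA.symm⟩, ⟨_, hB.symm⟩⟩
        have hset : pathEdges P.1 ∩ pathEdges P.2 =
            ↑(Epos.image (fun i => s(P.2 i.castSucc, P.2 i.succ))) := by
          ext e
          simp only [Set.mem_inter_iff, Finset.coe_image, Set.mem_image, Finset.mem_coe,
            hEpos, Finset.mem_filter, Finset.mem_univ, true_and]
          constructor
          · rintro ⟨h1, i, rfl⟩
            exact ⟨i, h1, rfl⟩
          · rintro ⟨i, hi, rfl⟩
            exact ⟨hi, i, rfl⟩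
        have hcardE : Epos.card = l := by
          rw [hset, Set.ncard_coe_finset, Finset.card_image_of_injOn hsym.injOn] at hshare
          exact hshare
        set E' : Finset ℕ := Epos.image (fun i : Fin k => (i : ℕ)) with hE'
        have hE'card : E'.card = l := by
          rw [hE', Finset.card_image_of_injective _ Fin.val_injective, hcardE]
        have hE'sub : E' ⊆ Finset.range k := by
          intro x hx
          rw [hE', Finset.mem_image] at hx
          obtain ⟨i, -, rfl⟩ := hx
          exact Finset.mem_range.mpr i.isLt
        set I : Finset ℕ := (Finset.Icc 1 (k-1)).filter (fun j => j ∈ E' ∨ j - 1 ∈ E')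
          with hI
        have hIcard : l ≤ I.card := coveredNat k l (by omega) E' hE'sub hE'card
        have hkI : k ∉ I := by
          intro hc
          rw [hI, Finset.mem_filter, Finset.mem_Icc] at hc
          omega
        have h0I : (0:ℕ) ∉ insert k I := by
          intro hc
          rw [Finset.mem_insert] at hc
          rcases hc with hc | hc
          · omega
          · rw [hI, Finset.mem_filter, Finset.mem_Icc] at hc
            omega
        set J : Finset ℕ := insert 0 (insert k I) with hJ
        have hJcard : J.card = I.card + 2 := by
          rw [hJ, Finset.card_insert_of_notMem h0I, Finset.card_insert_of_notMem hkI]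
        set f : ℕ → Fin (k+1) := fun j => if h : j < k + 1 then (⟨j, h⟩ : Fin (k+1)) else 0
          with hf
        have hJlt : ∀ z ∈ J, z < k + 1 := by
          intro z hz
          rw [hJ, Finset.mem_insert, Finset.mem_insert] at hz
          rcases hz with rfl | rfl | hz
          · omega
          · omega
          · rw [hI, Finset.mem_filter, Finset.mem_Icc] at hz
            omega
        have hmaps : ∀ j ∈ J, f j ∈
            univ.filter (fun j : Fin (k+1) => P.2 j ∈ Set.range P.1) := by
          intro j hj
          have hjlt : j < k + 1 := hJlt j hj
          rw [Finset.mem_filter]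
          refine ⟨Finset.mem_univ _, ?_⟩
          rw [hf]
          simp only [dif_pos hjlt]
          rw [hJ, Finset.mem_insert, Finset.mem_insert] at hj
          rcases hj with rfl | hjk | hj
          · have h00 : (⟨0, hjlt⟩ : Fin (k+1)) = 0 := rfl
            rw [h00, h20]
            exact ⟨0, h10⟩
          · have hkk : (⟨j, hjlt⟩ : Fin (k+1)) = Fin.last k :=
              Fin.val_injective (show j = k from hjk)
            rw [hkk, h2l]
            exact ⟨Fin.last k, h1l⟩
          · rw [hI, Finset.mem_filter, Finset.mem_Icc] at hj
            obtain ⟨⟨hj1, hjk⟩, hor⟩ := hj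
            rcases hor with hor | hor
            · rw [hE', Finset.mem_image] at hor
              obtain ⟨i, hiE, hival⟩ := hor
              have hix : (⟨j, hjlt⟩ : Fin (k+1)) = i.castSucc :=
                Fin.val_injective (by simp only [Fin.coe_castSucc]; omega)
              rw [hix]
              exact (hend i hiE).1
            · rw [hE', Finset.mem_image] at hor
              obtain ⟨i, hiE, hival⟩ := hor
              have hix : (⟨j, hjlt⟩ : Fin (k+1)) = i.succ :=
                Fin.val_injective (by simp only [Fin.val_succ]; omega)
              rw [hix]
              exact (hend i hiE).2
        have hinjf : Set.InjOn f J := by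
          intro x hx y hy hxy
          rw [Finset.mem_coe] at hx hy
          simp only [hf, dif_pos (hJlt x hx), dif_pos (hJlt y hy)] at hxy
          exact congrArg Fin.val hxy
        have := Finset.card_le_card_of_injOn f hmaps hinjf
        omega
      · -- injective on F
        intro P hP Q hQ h
        rw [Finset.mem_coe, hF, Set.Finite.mem_toFinset] at hP hQ
        obtain ⟨⟨h10, h1l, -, -⟩, ⟨h20, -, -, -⟩, -⟩ := hP
        obtain ⟨⟨g10, g1l, -, -⟩, ⟨g20, -, -, -⟩, -⟩ := hQ
        rw [hΦ, Prod.mk.injEq] at h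
        obtain ⟨h1, h2⟩ := h
        have hγ1 : P.1 = Q.1 := by
          funext i
          by_cases hi0 : i = 0
          · rw [hi0, h10, g10]
          by_cases hil : i = Fin.last k
          · rw [hil, h1l, g1l]
          have hiv : 1 ≤ i.val ∧ i.val ≤ k - 1 := by
            have := i.isLt
            constructor
            · rcases Nat.eq_zero_or_pos i.val with h | h
              · exact absurd (Fin.ext h) hi0
              · exact h
            · have : i.val ≠ k := fun hc => hil (Fin.ext hc)
              omega
          have := congrFun h1 ⟨i.val - 1, by omega⟩
          simp only at this
          have hix : (⟨i.val - 1 + 1, by omega⟩ : Fin (k+1)) = i :=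
            Fin.val_injective (show i.val - 1 + 1 = i.val by omega)
          rwa [hix] at this
        have hγ2 : P.2 = Q.2 := by
          funext j
          have hj := congrFun h2 j
          by_cases hm1 : P.2 j ∈ Set.range P.1 <;> by_cases hm2 : Q.2 j ∈ Set.range Q.1
          · rw [dif_pos hm1, dif_pos hm2, Sum.inl.injEq] at hj
            calc P.2 j = P.1 hm1.choose := hm1.choose_spec.symm
              _ = Q.1 hm2.choose := (congrFun hγ1 _).trans (congrArg Q.1 hj)
              _ = Q.2 j := hm2.choose_spec
          · rw [dif_pos hm1, dif_neg hm2] at hj; exact absurd hj (by simp)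
          · rw [dif_neg hm1, dif_pos hm2] at hj; exact absurd hj (by simp)
          · rw [dif_neg hm1, dif_neg hm2, Sum.inr.injEq] at hj; exact hj
        exact Prod.ext hγ1 hγ2
    have step2 : T.card ≤ 2^(k+1) * ((k+1)^(k+1) * (n^(k-1) * n^(k-1-l))) := by
      have hn : 0 < n := a.pos
      have hsub : T ⊆ ((univ : Finset (Finset (Fin (k+1)))).filter
          (fun s => l+2 ≤ s.card)).biUnion
          (fun s => univ.filter
            (fun p : (Fin (k-1) → Fin n) × (Fin (k+1) → (Fin (k+1) ⊕ Fin n)) =>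
              univ.filter (fun j => (p.2 j).isLeft) = s)) := by
        intro p hp
        rw [hT, Finset.mem_filter] at hp
        rw [Finset.mem_biUnion]
        exact ⟨_, by rw [Finset.mem_filter]; exact ⟨Finset.mem_univ _, hp.2⟩,
          by rw [Finset.mem_filter]; exact ⟨Finset.mem_univ _, rfl⟩⟩
      have hfib : ∀ s ∈ (univ : Finset (Finset (Fin (k+1)))).filter (fun s => l+2 ≤ s.card),
          (univ.filter
            (fun p : (Fin (k-1) → Fin n) × (Fin (k+1) → (Fin (k+1) ⊕ Fin n)) =>
              univ.filter (fun j => (p.2 j).isLeft) = s)).card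
            ≤ (k+1)^(k+1) * (n^(k-1) * n^(k-1-l)) := by
        intro s hs
        rw [Finset.mem_filter] at hs
        refine le_trans (Finset.card_le_card_of_injOn
          (t := (univ : Finset ((Fin (k-1) → Fin n) × (Fin (k+1) → Fin (k+1)) ×
            ({x // x ∈ sᶜ} → Fin n))))
          (fun p =>
            (p.1, fun j => Sum.elim id (fun _ => (0:Fin (k+1))) (p.2 j),
               fun j => Sum.elim (fun _ => a) id (p.2 j.val)))
          (fun p _ => Finset.mem_univ _) ?_) ?_
        case _ =>
          intro p hp q hq h
          rw [Finset.mem_coe, Finset.mem_filter] at hp hq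
          rw [Prod.mk.injEq, Prod.mk.injEq] at h
          obtain ⟨e1, e2, e3⟩ := h
          refine Prod.ext e1 ?_
          funext j
          by_cases hj : j ∈ s
          · have hpl : (p.2 j).isLeft := by
              rw [← hp.2, Finset.mem_filter] at hj; exact hj.2
            have hql : (q.2 j).isLeft := by
              rw [← hq.2, Finset.mem_filter] at hj; exact hj.2
            obtain ⟨x, hx⟩ := Sum.isLeft_iff.mp hpl
            obtain ⟨y, hy⟩ := Sum.isLeft_iff.mp hql
            have := congrFun e2 j
            rw [hx, hy] at this ⊢
            simpa using this
          · have hpl : ¬ (p.2 j).isLeft := by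
              intro hc
              apply hj
              rw [← hp.2, Finset.mem_filter]; exact ⟨Finset.mem_univ _, hc⟩
            have hql : ¬ (q.2 j).isLeft := by
              intro hc
              apply hj
              rw [← hq.2, Finset.mem_filter]; exact ⟨Finset.mem_univ _, hc⟩
            obtain ⟨x, hx⟩ := Sum.isRight_iff.mp (Sum.not_isLeft.mp hpl)
            obtain ⟨y, hy⟩ := Sum.isRight_iff.mp (Sum.not_isLeft.mp hql)
            have := congrFun e3 ⟨j, Finset.mem_compl.mpr hj⟩
            rw [hx, hy] at this ⊢
            simpa using this
        case _ =>
          rw [Finset.card_univ, Fintype.card_prod, Fintype.card_prod, Fintype.card_fun,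
            Fintype.card_fun, Fintype.card_fun, Fintype.card_coe, Fintype.card_fin,
            Fintype.card_fin, Fintype.card_fin]
          have h1 : sᶜ.card ≤ k - 1 - l := by
            have := Finset.card_compl s
            rw [Fintype.card_fin] at this
            omega
          have h2 : n ^ sᶜ.card ≤ n ^ (k-1-l) := Nat.pow_le_pow_right hn h1
          calc n ^ (k-1) * ((k+1)^(k+1) * n ^ sᶜ.card)
              ≤ n ^ (k-1) * ((k+1)^(k+1) * n ^ (k-1-l)) := by
                exact Nat.mul_le_mul_left _ (Nat.mul_le_mul_left _ h2)
            _ = (k+1)^(k+1) * (n^(k-1) * n^(k-1-l)) := by ring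
      calc T.card ≤ _ := Finset.card_le_card hsub
        _ ≤ ∑ s ∈ (univ : Finset (Finset (Fin (k+1)))).filter (fun s => l+2 ≤ s.card),
            (univ.filter
              (fun p : (Fin (k-1) → Fin n) × (Fin (k+1) → (Fin (k+1) ⊕ Fin n)) =>
                univ.filter (fun j => (p.2 j).isLeft) = s)).card := Finset.card_biUnion_le
        _ ≤ ((univ : Finset (Finset (Fin (k+1)))).filter (fun s => l+2 ≤ s.card)).card •
              ((k+1)^(k+1) * (n^(k-1) * n^(k-1-l))) := Finset.sum_le_card_nsmul _ _ _ hfib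
        _ ≤ 2^(k+1) * ((k+1)^(k+1) * (n^(k-1) * n^(k-1-l))) := by
            rw [smul_eq_mul]
            apply Nat.mul_le_mul_right
            calc ((univ : Finset (Finset (Fin (k+1)))).filter (fun s => l+2 ≤ s.card)).card
                ≤ (univ : Finset (Finset (Fin (k+1)))).card := Finset.card_filter_le _ _
              _ = 2^(k+1) := by rw [Finset.card_univ, Fintype.card_finset, Fintype.card_fin]
    calc F.card ≤ T.card := step1
      _ ≤ 2^(k+1) * ((k+1)^(k+1) * (n^(k-1) * n^(k-1-l))) := step2
      _ = 2^(k+1) * (k+1)^(k+1) * n^(2*k-2-l) := by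
          have he : (k-1) + (k-1-l) = 2*k-2-l := by omega
          rw [← pow_add, he, ← mul_assoc]
  calc (S.ncard : ℝ) ≤ ((2^(k+1) * (k+1)^(k+1) * n^(2*k-2-l) : ℕ) : ℝ) := by exact_mod_cast key
    _ = ((2^(k+1) * (k+1)^(k+1) : ℕ) : ℝ) * (n:ℝ)^(2*k-2-l) := by push_cast; ring
end

section
/- Let k ≥ 2 be an integer and let ε be a real number with k − 1 < 1/ε < k, and set p(n) := n^{−1+ε}. For distinct a, b ∈ Fin n let Δ_n denote the sum, over all ordered pairs (P₁, P₂) of distinct paths of length k between a and b in the complete graph on Fin n whose edge sets share at least one edge, of p(n)^{|E(P₁) ∪ E(P₂)|}, where |E(P₁) ∪ E(P₂)| is the number of edges in the union of the two edge sets. Then there is a constant C = C(k, ε) > 0 such that Δ_n ≤ C · n^{2(kε−1)−ε} for all n ≥ 2 and all distinct a, b ∈ Fin n. -/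
open Finset

section Aux

variable {V : Type*} {k : ℕ}

/-- The `j`-th edge of a path. -/
def eIdx (γ : Fin (k + 1) → V) (j : Fin k) : Sym2 V :=
  s(γ j.castSucc, γ j.succ)

lemma pathEdges_eq_range (γ : Fin (k + 1) → V) :
    pathEdges γ = Set.range (eIdx γ) := by
  ext e
  simp only [pathEdges, Set.mem_setOf_eq, Set.mem_range, eIdx, eq_comm]

lemma eIdx_injective {γ : Fin (k + 1) → V} (hγ : Function.Injective γ) :
    Function.Injective (eIdx γ) := by
  intro i j hij
  rw [eIdx, eIdx, Sym2.eq_iff] at hij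
  rcases hij with ⟨e1, _⟩ | ⟨e1, e2⟩
  · exact Fin.castSucc_injective _ (hγ e1)
  · have q1 : (i : ℕ) = (j : ℕ) + 1 := by
      simpa using congrArg Fin.val (hγ e1)
    have q2 : (i : ℕ) + 1 = (j : ℕ) := by
      simpa using congrArg Fin.val (hγ e2)
    omega

lemma ncard_pathEdges {γ : Fin (k + 1) → V} (hγ : Function.Injective γ) :
    (pathEdges γ).ncard = k := by
  rw [pathEdges_eq_range, ← Set.image_univ,
    Set.ncard_image_of_injective _ (eIdx_injective hγ), Set.ncard_univ, Nat.card_eq_fintype_card,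
    Fintype.card_fin]

lemma mem_range_of_mem_pathEdges {γ : Fin (k + 1) → V} {e : Sym2 V} {x : V}
    (he : e ∈ pathEdges γ) (hx : x ∈ e) : x ∈ Set.range γ := by
  obtain ⟨i, rfl⟩ := he
  rw [Sym2.mem_iff] at hx
  rcases hx with rfl | rfl
  · exact ⟨_, rfl⟩
  · exact ⟨_, rfl⟩

lemma path_eq_of_edges_subset {G : SimpleGraph V} {a b : V}
    {P1 P2 : Fin (k + 1) → V} (h1 : IsPathBetween G k a b P1)
    (h2 : IsPathBetween G k a b P2) (hsub : pathEdges P2 ⊆ pathEdges P1) :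
    P2 = P1 := by
  obtain ⟨h10, h1l, h1i, _⟩ := h1
  obtain ⟨h20, h2l, h2i, _⟩ := h2
  have key : ∀ m : ℕ, ∀ i : Fin (k + 1), (i : ℕ) ≤ m → P2 i = P1 i := by
    intro m
    induction m with
    | zero =>
      intro i hi
      have hi0 : i = 0 := Fin.ext (by rw [Fin.val_zero]; omega)
      subst hi0; rw [h20, h10]
    | succ m ih =>
      intro i hi
      by_cases hm : (i : ℕ) ≤ m
      · exact ih i hm
      have him : (i : ℕ) = m + 1 := by omega
      have hmk : m < k := by have := i.isLt; omega
      set j' : Fin k := ⟨m, hmk⟩ with hj'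
      have hics : P2 j'.castSucc = P1 j'.castSucc := ih _ (by simp [hj'])
      have hedge : s(P2 j'.castSucc, P2 j'.succ) ∈ pathEdges P1 := hsub ⟨j', rfl⟩
      have hii : j'.succ = i := Fin.ext (by simp [hj', him])
      obtain ⟨jj, hjj⟩ := hedge
      rw [Sym2.eq_iff] at hjj
      rcases hjj with ⟨hA, hB⟩ | ⟨hA, hB⟩
      · have hj : jj = j' := Fin.castSucc_injective _ (h1i (hics ▸ hA)).symm
        rw [← hii, hB, hj]
      · have hcs : j'.castSucc = jj.succ := h1i (hics ▸ hA)
        have hv : (m : ℕ) = (jj : ℕ) + 1 := by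
          simpa using congrArg Fin.val hcs
        have hjcs : P2 jj.castSucc = P1 jj.castSucc := ih _ (by simp; omega)
        have : i = jj.castSucc := h2i (by rw [hii] at hB; rw [hB, ← hjcs])
        have := congrArg Fin.val this
        simp [him] at this
        omega
  funext i
  exact key k i (by omega)

lemma union_ncard_ge {n : ℕ} {a b : Fin n} {P1 P2 : Fin (k + 1) → Fin n}
    (hk : 1 ≤ k)
    (h1 : IsPathBetween (⊤ : SimpleGraph (Fin n)) k a b P1)
    (h2 : IsPathBetween (⊤ : SimpleGraph (Fin n)) k a b P2)
    (hne : P1 ≠ P2) :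
    k + 1 + (Finset.univ.filter (fun i => P2 i ∉ Set.range P1)).card
      ≤ (pathEdges P1 ∪ pathEdges P2).ncard := by
  classical
  have h10 := h1.1
  have h1l := h1.2.1
  have h1i := h1.2.2.1
  have h20 := h2.1
  have h2l := h2.2.1
  have h2i := h2.2.2.1
  set Nf : Finset (Fin (k + 1)) := Finset.univ.filter (fun i => P2 i ∉ Set.range P1) with hNf
  set Jf : Finset (Fin k) := Finset.univ.filter (fun j => eIdx P2 j ∉ pathEdges P1) with hJf
  -- bounds on elements of Nf
  have hNmem : ∀ i ∈ Nf, 1 ≤ (i : ℕ) ∧ (i : ℕ) ≤ k - 1 := by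
    intro i hi
    rw [hNf, Finset.mem_filter] at hi
    have hi' := hi.2
    constructor
    · by_contra h
      have hi0 : i = 0 := Fin.ext (by rw [Fin.val_zero]; omega)
      exact hi' ⟨0, by rw [h10, hi0, h20]⟩
    · have hlt := i.isLt
      by_contra h
      have hil : i = Fin.last k := Fin.ext (by simp [Fin.last]; omega)
      exact hi' ⟨Fin.last k, by rw [h1l, hil, h2l]⟩
  -- if an endpoint of the j-th edge of P2 is new, then the edge is new
  have hJmem : ∀ j : Fin k, (P2 j.castSucc ∉ Set.range P1 ∨ P2 j.succ ∉ Set.range P1) →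
      j ∈ Jf := by
    intro j hj
    rw [hJf, Finset.mem_filter]
    refine ⟨Finset.mem_univ _, fun he => ?_⟩
    rcases hj with hj | hj
    · exact hj (mem_range_of_mem_pathEdges he (by rw [eIdx]; exact Sym2.mem_mk_left _ _))
    · exact hj (mem_range_of_mem_pathEdges he (by rw [eIdx]; exact Sym2.mem_mk_right _ _))
  -- |Jf| ≥ |Nf| + 1
  have hcard : Nf.card + 1 ≤ Jf.card := by
    rcases Finset.eq_empty_or_nonempty Nf with hN | hN
    · -- Nf empty: enough that Jf is nonempty
      rw [hN, Finset.card_empty]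
      rcases Finset.eq_empty_or_nonempty Jf with hJ | hJ
      · exfalso
        apply hne
        have hsub : pathEdges P2 ⊆ pathEdges P1 := by
          intro e he
          obtain ⟨j, rfl⟩ := he
          by_contra hc
          have : j ∈ Jf := by rw [hJf, Finset.mem_filter]; exact ⟨Finset.mem_univ _, hc⟩
          simp [hJ] at this
        exact (path_eq_of_edges_subset h1 h2 hsub).symm
      · simpa using Finset.card_pos.mpr hJ
    · -- Nf nonempty
      set i₀ := Nf.max' hN with hi₀
      have hi₀N : i₀ ∈ Nf := Nf.max'_mem hN
      have hi₀b := hNmem i₀ hi₀N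
      set pred : Fin (k + 1) → Fin k := fun i => ⟨(i : ℕ) - 1, by have := i.isLt; omega⟩
        with hpred
      set j₀ : Fin k := ⟨(i₀ : ℕ), by omega⟩ with hj₀
      have hins : insert j₀ (Nf.image pred) ⊆ Jf := by
        intro j hj
        rcases Finset.mem_insert.mp hj with rfl | hj
        · apply hJmem
          left
          have : j₀.castSucc = i₀ := Fin.ext (by simp [hj₀])
          rw [this]
          exact (Finset.mem_filter.mp hi₀N).2
        · obtain ⟨i, hiN, rfl⟩ := Finset.mem_image.mp hj
          have hib := hNmem i hiN
          apply hJmem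
          right
          have : (pred i).succ = i := Fin.ext (by simp [hpred]; omega)
          rw [this]
          exact (Finset.mem_filter.mp hiN).2
      have hnotmem : j₀ ∉ Nf.image pred := by
        intro hmem
        obtain ⟨i, hiN, hie⟩ := Finset.mem_image.mp hmem
        have hib := hNmem i hiN
        have : (i : ℕ) - 1 = (i₀ : ℕ) := by simpa [hpred, hj₀] using congrArg Fin.val hie
        have hle : i ≤ i₀ := Nf.le_max' i hiN
        have := Fin.le_iff_val_le_val.mp hle
        omega
      have hinj : Set.InjOn pred Nf := by
        intro x hx y hy hxy
        have hxb := hNmem x hx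
        have hyb := hNmem y hy
        have := congrArg Fin.val hxy
        simp [hpred] at this
        exact Fin.ext (by omega)
      calc Nf.card + 1 = (insert j₀ (Nf.image pred)).card := by
            rw [Finset.card_insert_of_notMem hnotmem, Finset.card_image_of_injOn hinj]
        _ ≤ Jf.card := Finset.card_le_card hins
  -- now convert to ncard of the union
  have hsplit : (pathEdges P1 ∪ pathEdges P2).ncard
      = (pathEdges P1).ncard + (pathEdges P2 \ pathEdges P1).ncard := by
    rw [← Set.ncard_union_eq (Set.disjoint_sdiff_right) (Set.toFinite _) (Set.toFinite _),
      Set.union_diff_self]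
  have hE1 : (pathEdges P1).ncard = k := ncard_pathEdges h1i
  have hJle : Jf.card ≤ (pathEdges P2 \ pathEdges P1).ncard := by
    have himsub : ↑(Jf.image (eIdx P2)) ⊆ pathEdges P2 \ pathEdges P1 := by
      intro e he
      simp only [Finset.coe_image, Set.mem_image, Finset.mem_coe] at he
      obtain ⟨j, hj, rfl⟩ := he
      rw [hJf, Finset.mem_filter] at hj
      exact ⟨⟨j, rfl⟩, hj.2⟩
    calc Jf.card = (Jf.image (eIdx P2)).card :=
          (Finset.card_image_of_injective _ (eIdx_injective h2i)).symm
      _ = (↑(Jf.image (eIdx P2)) : Set (Sym2 (Fin n))).ncard := (Set.ncard_coe_finset _).symm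
      _ ≤ _ := Set.ncard_le_ncard himsub (Set.toFinite _)
  omega

end Aux

set_option maxHeartbeats 2000000 in
open Classical in
lemma count_bound {k n : ℕ} (hk : 2 ≤ k) (a b : Fin n) (p : ℝ) (hp : 0 ≤ p)
    (i₀ : Fin (k + 1)) (hi₀1 : 1 ≤ (i₀ : ℕ)) (hi₀2 : (i₀ : ℕ) ≤ k - 1)
    (s : Finset ((Fin (k + 1) → Fin n) × (Fin (k + 1) → Fin n)))
    (hs : ∀ P ∈ s, P.1 0 = a ∧ P.1 (Fin.last k) = b ∧ P.2 0 = a ∧ P.2 (Fin.last k) = b ∧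
      P.2 i₀ ∈ Set.range P.1) :
    ∑ P ∈ s, p ^ (Finset.univ.filter (fun i => P.2 i ∉ Set.range P.1)).card
      ≤ (n : ℝ) ^ (k - 1) * (((k : ℝ) + 1) ^ 3 * ((n : ℝ) * p + ((k : ℝ) + 1)) ^ (k - 2)) := by
  set F : Finset (Fin (k + 1)) := {0, Fin.last k, i₀} with hF
  set tset : Fin (k + 1) → Finset (Fin n ⊕ Fin (k + 1)) := fun i =>
    if i ∈ F then Finset.univ.image Sum.inr else Finset.univ with htset
  set Dq : Finset (Fin (k + 1) → Fin n) :=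
    Finset.univ.filter (fun Q => Q 0 = a ∧ Q (Fin.last k) = b) with hDq
  set w : Fin n ⊕ Fin (k + 1) → ℝ := Sum.elim (fun _ => p) (fun _ => 1) with hw
  have hw0 : ∀ c, 0 ≤ w c := by rintro (v | j) <;> simp [hw, hp]
  set Φ : (Fin (k + 1) → Fin n) × (Fin (k + 1) → Fin n) →
      (Fin (k + 1) → Fin n) × (Fin (k + 1) → Fin n ⊕ Fin (k + 1)) :=
    fun P => (P.1, fun i => if h : P.2 i ∈ Set.range P.1 then Sum.inr h.choose
      else Sum.inl (P.2 i)) with hΦ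
  have hrec : ∀ P : (Fin (k + 1) → Fin n) × (Fin (k + 1) → Fin n), ∀ i,
      P.2 i = Sum.elim id (Φ P).1 ((Φ P).2 i) := by
    intro P i
    by_cases h : P.2 i ∈ Set.range P.1
    · simp only [hΦ, dif_pos h, Sum.elim_inr]
      exact h.choose_spec.symm
    · simp only [hΦ, dif_neg h, Sum.elim_inl, id]
  have hinj : Set.InjOn Φ s := by
    intro P _ Q _ hPQ
    have e1 : P.1 = Q.1 := by
      rw [show P.1 = (Φ P).1 from rfl, hPQ]
    have e2 : P.2 = Q.2 := by
      funext i
      rw [hrec P i, hrec Q i, hPQ]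
    exact Prod.ext e1 e2
  have hmaps : ∀ P ∈ s, Φ P ∈ Dq ×ˢ Fintype.piFinset tset := by
    intro P hP
    obtain ⟨hq1, hq2, hq3, hq4, hq5⟩ := hs P hP
    rw [Finset.mem_product]
    constructor
    · rw [hDq, Finset.mem_filter]
      exact ⟨Finset.mem_univ _, hq1, hq2⟩
    · rw [Fintype.mem_piFinset]
      intro i
      by_cases hiF : i ∈ F
      · have htsi : tset i = Finset.univ.image Sum.inr := if_pos hiF
        rw [htsi]
        have hold : P.2 i ∈ Set.range P.1 := by
          rw [hF] at hiF
          simp only [Finset.mem_insert, Finset.mem_singleton] at hiF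
          rcases hiF with rfl | rfl | rfl
          · exact ⟨0, by rw [hq1, hq3]⟩
          · exact ⟨Fin.last k, by rw [hq2, hq4]⟩
          · exact hq5
        simp only [hΦ, dif_pos hold]
        exact Finset.mem_image.mpr ⟨_, Finset.mem_univ _, rfl⟩
      · have htsi : tset i = Finset.univ := if_neg hiF
        rw [htsi]
        exact Finset.mem_univ _
  have hweight : ∀ P : (Fin (k + 1) → Fin n) × (Fin (k + 1) → Fin n),
      ∏ i, w ((Φ P).2 i) = p ^ (Finset.univ.filter (fun i => P.2 i ∉ Set.range P.1)).card := by
    intro P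
    have hterm : ∀ i, w ((Φ P).2 i) = if P.2 i ∉ Set.range P.1 then p else 1 := by
      intro i
      by_cases h : P.2 i ∈ Set.range P.1
      · simp only [hΦ]
        rw [dif_pos h]
        simp [hw, h]
      · simp only [hΦ]
        rw [dif_neg h]
        simp [hw, h]
    rw [Finset.prod_congr rfl (fun i _ => hterm i), Finset.prod_ite,
      Finset.prod_const, Finset.prod_const, one_pow, mul_one]
  have hfactor : ∀ i : Fin (k + 1),
      ∑ c ∈ tset i, w c = if i ∈ F then ((k : ℝ) + 1) else ((n : ℝ) * p + ((k : ℝ) + 1)) := by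
    intro i
    by_cases hiF : i ∈ F
    · have htsi : tset i = Finset.univ.image Sum.inr := if_pos hiF
      rw [htsi, if_pos hiF]
      rw [Finset.sum_image (fun x _ y _ h => Sum.inr_injective h)]
      simp [hw]
    · have htsi : tset i = Finset.univ := if_neg hiF
      rw [htsi, if_neg hiF]
      rw [Fintype.sum_sum_type]
      simp only [hw, Sum.elim_inl, Sum.elim_inr, Finset.sum_const, Finset.card_univ,
        Fintype.card_fin, nsmul_eq_mul, mul_one]
      push_cast
      ring
  have hF0l : (0 : Fin (k+1)) ≠ Fin.last k := by
    rw [Fin.ne_iff_vne]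
    simp [Fin.last]
    omega
  have hF0i : (0 : Fin (k+1)) ≠ i₀ := by
    rw [Fin.ne_iff_vne]
    simp
    omega
  have hFli : Fin.last k ≠ i₀ := by
    rw [Fin.ne_iff_vne]
    simp [Fin.last]
    omega
  have hFcard : F.card = 3 := by
    rw [hF, Finset.card_insert_of_notMem (by simp [hF0l, hF0i]),
      Finset.card_insert_of_notMem (by simp [hFli]), Finset.card_singleton]
  have hprod : (∏ i, ∑ c ∈ tset i, w c)
      = ((k : ℝ) + 1) ^ 3 * ((n : ℝ) * p + ((k : ℝ) + 1)) ^ (k - 2) := by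
    rw [Finset.prod_congr rfl (fun i _ => hfactor i), Finset.prod_ite,
      Finset.prod_const, Finset.prod_const]
    have h1 : (Finset.univ.filter (fun i => i ∈ F)).card = 3 := by
      rw [Finset.filter_univ_mem, hFcard]
    have h2 : (Finset.univ.filter (fun i => ¬ i ∈ F)).card = k - 2 := by
      have := Finset.card_filter_add_card_filter_not
        (s := (Finset.univ : Finset (Fin (k+1)))) (p := fun i => i ∈ F)
      have hcu : (Finset.univ : Finset (Fin (k+1))).card = k + 1 := by
        simp
      omega
    rw [h1, h2]
  have hB0 : (0 : ℝ) ≤ (n : ℝ) * p + ((k : ℝ) + 1) := by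
    have h1 : (0 : ℝ) ≤ (n : ℝ) * p := mul_nonneg (Nat.cast_nonneg n) hp
    have h2 : (0 : ℝ) ≤ (k : ℝ) + 1 := by positivity
    linarith
  have hX0 : (0 : ℝ) ≤ ((k : ℝ) + 1) ^ 3 * ((n : ℝ) * p + ((k : ℝ) + 1)) ^ (k - 2) :=
    mul_nonneg (by positivity) (pow_nonneg hB0 _)
  have hDqcard : (Dq.card : ℝ) ≤ (n : ℝ) ^ (k - 1) := by
    have hcard : Dq.card ≤ n ^ (k - 1) := by
      calc Dq.card ≤ (Finset.univ : Finset (Fin (k - 1) → Fin n)).card := by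
            apply Finset.card_le_card_of_injOn
              (fun Q (j : Fin (k - 1)) => Q ⟨(j : ℕ) + 1, by have := j.isLt; omega⟩)
            · intro Q _; exact Finset.mem_univ _
            · intro Q hQ Q' hQ' hQQ
              simp only [hDq, Finset.coe_filter, Set.mem_setOf_eq, Finset.mem_univ,
                true_and] at hQ hQ'
              funext i
              rcases Nat.eq_zero_or_pos (i : ℕ) with hi | hi
              · have : i = 0 := Fin.ext (by simp [hi])
                rw [this, hQ.1, hQ'.1]
              · rcases Nat.lt_or_ge (i : ℕ) k with hik | hik
                · have hj : (i : ℕ) - 1 < k - 1 := by omega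
                  have h5 := congrFun hQQ ⟨(i : ℕ) - 1, hj⟩
                  simp only at h5
                  convert h5 using 2 <;> exact Fin.ext (by simp; omega)
                · have : i = Fin.last k := Fin.ext (by simp [Fin.last]; have := i.isLt; omega)
                  rw [this, hQ.2, hQ'.2]
      _ = n ^ (k - 1) := by simp [Finset.card_univ]
    calc (Dq.card : ℝ) ≤ ((n ^ (k - 1) : ℕ) : ℝ) := by exact_mod_cast hcard
      _ = (n : ℝ) ^ (k - 1) := by push_cast; ring
  calc ∑ P ∈ s, p ^ (Finset.univ.filter (fun i => P.2 i ∉ Set.range P.1)).card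
      = ∑ P ∈ s, ∏ i, w ((Φ P).2 i) :=
        Finset.sum_congr rfl (fun P _ => (hweight P).symm)
    _ = ∑ y ∈ s.image Φ, ∏ i, w (y.2 i) := by
        have hsi := Finset.sum_image (s := s) (g := Φ)
          (f := fun (y : (Fin (k + 1) → Fin n) × (Fin (k + 1) → Fin n ⊕ Fin (k + 1))) =>
            ∏ i, w (y.2 i))
          (fun x hx y hy h => hinj hx hy h)
        exact hsi.symm
    _ ≤ ∑ y ∈ Dq ×ˢ Fintype.piFinset tset, ∏ i, w (y.2 i) := by
        apply Finset.sum_le_sum_of_subset_of_nonneg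
        · intro y hy
          obtain ⟨P, hP, rfl⟩ := Finset.mem_image.mp hy
          exact hmaps P hP
        · intro y _ _
          exact Finset.prod_nonneg (fun i _ => hw0 _)
    _ = ∑ _Q ∈ Dq, ∑ g ∈ Fintype.piFinset tset, ∏ i, w (g i) := by
        rw [Finset.sum_product]
    _ = (Dq.card : ℝ) * ∏ i, ∑ c ∈ tset i, w c := by
        rw [Finset.sum_const, nsmul_eq_mul, ← Finset.prod_univ_sum]
    _ ≤ (n : ℝ) ^ (k - 1) * (((k : ℝ) + 1) ^ 3 * ((n : ℝ) * p + ((k : ℝ) + 1)) ^ (k - 2)) := by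
        rw [hprod]
        exact mul_le_mul_of_nonneg_right hDqcard hX0

set_option maxHeartbeats 2000000 in
open Classical in
/-- With `k ≥ 2`, `k − 1 < 1/ε < k` and `p(n) = n^(−1+ε)`: there is a constant
`C = C(k, ε) > 0` such that for all `n ≥ 2` and all distinct `a, b : Fin n`, the sum
`Δ_n = ∑ p(n)^{|E(P₁) ∪ E(P₂)|}` over ordered pairs of distinct, edge-sharing paths of
length `k` between `a` and `b` in the complete graph satisfies
`Δ_n ≤ C · n^(2(kε−1)−ε)`. -/
theorem delta_bound
    (k : ℕ) (hk : 2 ≤ k) (ε : ℝ) (h1 : (k : ℝ) - 1 < 1 / ε) (h2 : 1 / ε < k) :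
    ∃ C : ℝ, 0 < C ∧ ∀ n : ℕ, 2 ≤ n → ∀ a b : Fin n, a ≠ b →
      (∑ᶠ P ∈ {P : (Fin (k + 1) → Fin n) × (Fin (k + 1) → Fin n) |
            IsPathBetween (⊤ : SimpleGraph (Fin n)) k a b P.1 ∧
            IsPathBetween (⊤ : SimpleGraph (Fin n)) k a b P.2 ∧
            P.1 ≠ P.2 ∧ (pathEdges P.1 ∩ pathEdges P.2).Nonempty},
          ((n : ℝ) ^ (-1 + ε)) ^ (pathEdges P.1 ∪ pathEdges P.2).ncard)
        ≤ C * (n : ℝ) ^ (2 * ((k : ℝ) * ε - 1) - ε) := by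
  have hk2 : (2 : ℝ) ≤ (k : ℝ) := by exact_mod_cast hk
  have hε0 : 0 < ε := by
    rcases lt_trichotomy ε 0 with h | h | h
    · have : 1 / ε < 0 := div_neg_of_pos_of_neg one_pos h
      linarith
    · rw [h] at h1
      norm_num at h1
      linarith
    · exact h
  have hεlt1 : ε < 1 := by
    have h1e : (1 : ℝ) < 1 / ε := by linarith
    calc ε = ε * 1 := (mul_one ε).symm
      _ < ε * (1 / ε) := by exact mul_lt_mul_of_pos_left h1e hε0
      _ = 1 := by field_simp
  refine ⟨((k : ℝ) + 1) ^ 4 * ((k : ℝ) + 2) ^ k, by positivity, ?_⟩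
  intro n hn a b hab
  have hn1 : (1 : ℝ) ≤ (n : ℝ) := by
    have : (2 : ℝ) ≤ (n : ℝ) := by exact_mod_cast hn
    linarith
  have hn0 : (0 : ℝ) < (n : ℝ) := by linarith
  have hp0 : (0 : ℝ) < (n : ℝ) ^ (-1 + ε) := Real.rpow_pos_of_pos hn0 _
  have hp1 : (n : ℝ) ^ (-1 + ε) ≤ 1 :=
    Real.rpow_le_one_of_one_le_of_nonpos hn1 (by linarith)
  -- the set of pairs as a Finset
  set Sfin : Finset ((Fin (k + 1) → Fin n) × (Fin (k + 1) → Fin n)) :=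
    Finset.univ.filter (fun P =>
      IsPathBetween (⊤ : SimpleGraph (Fin n)) k a b P.1 ∧
      IsPathBetween (⊤ : SimpleGraph (Fin n)) k a b P.2 ∧
      P.1 ≠ P.2 ∧ (pathEdges P.1 ∩ pathEdges P.2).Nonempty) with hSfin
  have hset : {P : (Fin (k + 1) → Fin n) × (Fin (k + 1) → Fin n) |
      IsPathBetween (⊤ : SimpleGraph (Fin n)) k a b P.1 ∧
      IsPathBetween (⊤ : SimpleGraph (Fin n)) k a b P.2 ∧
      P.1 ≠ P.2 ∧ (pathEdges P.1 ∩ pathEdges P.2).Nonempty} = (↑Sfin : Set _) := by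
    rw [hSfin]
    ext P
    simp
  rw [hset, finsum_mem_coe_finset]
  -- abbreviation for the count of "new" vertices in the second path
  set tP : (Fin (k + 1) → Fin n) × (Fin (k + 1) → Fin n) → ℕ :=
    fun P => (Finset.univ.filter (fun i => P.2 i ∉ Set.range P.1)).card with htP
  set I : Finset (Fin (k + 1)) :=
    Finset.univ.filter (fun i => 1 ≤ (i : ℕ) ∧ (i : ℕ) ≤ k - 1) with hI
  -- membership facts
  have hmem : ∀ P ∈ Sfin, IsPathBetween (⊤ : SimpleGraph (Fin n)) k a b P.1 ∧
      IsPathBetween (⊤ : SimpleGraph (Fin n)) k a b P.2 ∧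
      P.1 ≠ P.2 ∧ (pathEdges P.1 ∩ pathEdges P.2).Nonempty := by
    intro P hP
    rw [hSfin, Finset.mem_filter] at hP
    exact hP.2
  -- every pair has an internal old position
  have hwitness : ∀ P ∈ Sfin, ∃ i₀ ∈ I, P.2 i₀ ∈ Set.range P.1 := by
    intro P hP
    obtain ⟨hP1, hP2, hne, e, he1, he2⟩ := hmem P hP
    obtain ⟨j, hj⟩ := he2
    have hmem' : ∀ x, x ∈ e → x ∈ Set.range P.1 := fun x hx =>
      mem_range_of_mem_pathEdges he1 hx
    by_cases hj0 : (j : ℕ) = 0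
    · refine ⟨⟨1, by omega⟩, ?_, ?_⟩
      · rw [hI, Finset.mem_filter]
        exact ⟨Finset.mem_univ _, by simp, by simp; omega⟩
      · have he : (⟨1, by omega⟩ : Fin (k + 1)) = j.succ := Fin.ext (by simp; omega)
        rw [he]
        exact hmem' _ (by rw [hj]; exact Sym2.mem_mk_right _ _)
    · refine ⟨j.castSucc, ?_, ?_⟩
      · rw [hI, Finset.mem_filter]
        refine ⟨Finset.mem_univ _, by simp; omega, by simp; have := j.isLt; omega⟩
      · exact hmem' _ (by rw [hj]; exact Sym2.mem_mk_left _ _)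
  have hIcard : (I.card : ℝ) ≤ (k : ℝ) + 1 := by
    have : I.card ≤ k + 1 := by
      calc I.card ≤ Fintype.card (Fin (k + 1)) := Finset.card_le_univ I
        _ = k + 1 := Fintype.card_fin _
    exact_mod_cast this
  set X : ℝ := (n : ℝ) ^ (k - 1) *
      (((k : ℝ) + 1) ^ 3 * ((n : ℝ) * ((n : ℝ) ^ (-1 + ε)) + ((k : ℝ) + 1)) ^ (k - 2))
    with hX
  have hB0 : (0 : ℝ) ≤ (n : ℝ) * ((n : ℝ) ^ (-1 + ε)) + ((k : ℝ) + 1) := by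
    have h1' : (0 : ℝ) ≤ (n : ℝ) * ((n : ℝ) ^ (-1 + ε)) := by positivity
    have h2' : (0 : ℝ) ≤ (k : ℝ) + 1 := by positivity
    linarith
  have hX0 : 0 ≤ X := by
    rw [hX]
    apply mul_nonneg (by positivity)
    exact mul_nonneg (by positivity) (pow_nonneg hB0 _)
  calc ∑ P ∈ Sfin, ((n : ℝ) ^ (-1 + ε)) ^ (pathEdges P.1 ∪ pathEdges P.2).ncard
      ≤ ∑ P ∈ Sfin, ((n : ℝ) ^ (-1 + ε)) ^ (k + 1 + tP P) := by
        apply Finset.sum_le_sum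
        intro P hP
        obtain ⟨hP1, hP2, hne, hsh⟩ := hmem P hP
        exact pow_le_pow_of_le_one hp0.le hp1
          (union_ncard_ge (by omega) hP1 hP2 hne)
    _ ≤ ∑ i₀ ∈ I, ∑ P ∈ Sfin.filter (fun P => P.2 i₀ ∈ Set.range P.1),
          ((n : ℝ) ^ (-1 + ε)) ^ (k + 1 + tP P) := by
        have hrw : ∀ i₀, ∑ P ∈ Sfin.filter (fun P => P.2 i₀ ∈ Set.range P.1),
            ((n : ℝ) ^ (-1 + ε)) ^ (k + 1 + tP P)
            = ∑ P ∈ Sfin, if P.2 i₀ ∈ Set.range P.1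
                then ((n : ℝ) ^ (-1 + ε)) ^ (k + 1 + tP P) else 0 :=
          fun i₀ => Finset.sum_filter _ _
        calc ∑ P ∈ Sfin, ((n : ℝ) ^ (-1 + ε)) ^ (k + 1 + tP P)
            ≤ ∑ P ∈ Sfin, ∑ i₀ ∈ I, (if P.2 i₀ ∈ Set.range P.1
                then ((n : ℝ) ^ (-1 + ε)) ^ (k + 1 + tP P) else 0) := by
              apply Finset.sum_le_sum
              intro P hP
              obtain ⟨i₀, hi₀I, hi₀⟩ := hwitness P hP
              have hle := Finset.single_le_sum (f := fun j => if P.2 j ∈ Set.range P.1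
                then ((n : ℝ) ^ (-1 + ε)) ^ (k + 1 + tP P) else 0)
                (fun i _ => by split <;> positivity) hi₀I
              simpa [hi₀] using hle
          _ = ∑ i₀ ∈ I, ∑ P ∈ Sfin, (if P.2 i₀ ∈ Set.range P.1
                then ((n : ℝ) ^ (-1 + ε)) ^ (k + 1 + tP P) else 0) := Finset.sum_comm
          _ = _ := by
              refine Finset.sum_congr rfl fun i₀ _ => (hrw i₀).symm
    _ ≤ ∑ i₀ ∈ I, ((n : ℝ) ^ (-1 + ε)) ^ (k + 1) * X := by
        apply Finset.sum_le_sum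
        intro i₀ hi₀I
        rw [hI, Finset.mem_filter] at hi₀I
        obtain ⟨-, hi₀1, hi₀2⟩ := hi₀I
        calc ∑ P ∈ Sfin.filter (fun P => P.2 i₀ ∈ Set.range P.1),
              ((n : ℝ) ^ (-1 + ε)) ^ (k + 1 + tP P)
            = ∑ P ∈ Sfin.filter (fun P => P.2 i₀ ∈ Set.range P.1),
              ((n : ℝ) ^ (-1 + ε)) ^ (k + 1) * ((n : ℝ) ^ (-1 + ε)) ^ (tP P) := by
              refine Finset.sum_congr rfl fun P _ => pow_add _ _ _
          _ = ((n : ℝ) ^ (-1 + ε)) ^ (k + 1) *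
              ∑ P ∈ Sfin.filter (fun P => P.2 i₀ ∈ Set.range P.1),
                ((n : ℝ) ^ (-1 + ε)) ^ (tP P) := by
              rw [Finset.mul_sum]
          _ ≤ ((n : ℝ) ^ (-1 + ε)) ^ (k + 1) * X := by
              apply mul_le_mul_of_nonneg_left ?_ (by positivity)
              rw [hX]
              apply count_bound hk a b _ hp0.le i₀ hi₀1 hi₀2
              intro P hP
              rw [Finset.mem_filter] at hP
              obtain ⟨hPS, hPi₀⟩ := hP
              obtain ⟨hP1, hP2, -, -⟩ := hmem P hPS
              exact ⟨hP1.1, hP1.2.1, hP2.1, hP2.2.1, hPi₀⟩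
    _ = (I.card : ℝ) * (((n : ℝ) ^ (-1 + ε)) ^ (k + 1) * X) := by
        rw [Finset.sum_const, nsmul_eq_mul]
    _ ≤ ((k : ℝ) + 1) * (((n : ℝ) ^ (-1 + ε)) ^ (k + 1) * X) := by
        apply mul_le_mul_of_nonneg_right hIcard
        exact mul_nonneg (by positivity) hX0
    _ ≤ ((k : ℝ) + 1) ^ 4 * ((k : ℝ) + 2) ^ k * (n : ℝ) ^ (2 * ((k : ℝ) * ε - 1) - ε) := by
        -- final analytic computation
        have hnp : (n : ℝ) * ((n : ℝ) ^ (-1 + ε)) = (n : ℝ) ^ ε := by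
          have hadd : (n : ℝ) ^ ((1 : ℝ) + (-1 + ε))
              = (n : ℝ) ^ (1 : ℝ) * (n : ℝ) ^ (-1 + ε) := Real.rpow_add hn0 _ _
          rw [Real.rpow_one] at hadd
          rw [← hadd]
          norm_num
        have hnε1 : 1 ≤ (n : ℝ) ^ ε := by
          rw [show (1 : ℝ) = (n : ℝ) ^ (0 : ℝ) from (Real.rpow_zero _).symm]
          exact Real.rpow_le_rpow_of_exponent_le hn1 hε0.le
        have hB : (n : ℝ) * ((n : ℝ) ^ (-1 + ε)) + ((k : ℝ) + 1)
            ≤ ((k : ℝ) + 2) * (n : ℝ) ^ ε := by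
          rw [hnp]
          nlinarith [hnε1, hk2]
        have hBpow : ((n : ℝ) * ((n : ℝ) ^ (-1 + ε)) + ((k : ℝ) + 1)) ^ (k - 2)
            ≤ ((k : ℝ) + 2) ^ (k - 2) * ((n : ℝ) ^ ε) ^ (k - 2) := by
          rw [← mul_pow]
          exact pow_le_pow_left₀ hB0 hB _
        have hmain : ((n : ℝ) ^ (-1 + ε)) ^ (k + 1) * ((n : ℝ) ^ (k - 1) *
            ((n : ℝ) ^ ε) ^ (k - 2)) = (n : ℝ) ^ (2 * ((k : ℝ) * ε - 1) - ε) := by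
          rw [← Real.rpow_natCast ((n : ℝ) ^ (-1 + ε)) (k + 1), ← Real.rpow_mul hn0.le,
            ← Real.rpow_natCast (n : ℝ) (k - 1),
            ← Real.rpow_natCast ((n : ℝ) ^ ε) (k - 2), ← Real.rpow_mul hn0.le,
            ← Real.rpow_add hn0, ← Real.rpow_add hn0]
          congr 1
          have e1 : ((k - 1 : ℕ) : ℝ) = (k : ℝ) - 1 := by
            rw [Nat.cast_sub (by omega)]
            norm_num
          have e2 : ((k - 2 : ℕ) : ℝ) = (k : ℝ) - 2 := by
            rw [Nat.cast_sub hk]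
            norm_num
          have e3 : ((k + 1 : ℕ) : ℝ) = (k : ℝ) + 1 := by push_cast; ring
          rw [e1, e2, e3]
          ring
        have hpow2 : ((k : ℝ) + 2) ^ (k - 2) ≤ ((k : ℝ) + 2) ^ k :=
          pow_le_pow_right₀ (by linarith) (by omega)
        calc ((k : ℝ) + 1) * (((n : ℝ) ^ (-1 + ε)) ^ (k + 1) * X)
            ≤ ((k : ℝ) + 1) * (((n : ℝ) ^ (-1 + ε)) ^ (k + 1) * ((n : ℝ) ^ (k - 1) *
              (((k : ℝ) + 1) ^ 3 * (((k : ℝ) + 2) ^ (k - 2) * ((n : ℝ) ^ ε) ^ (k - 2))))) := by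
              apply mul_le_mul_of_nonneg_left ?_ (by positivity)
              apply mul_le_mul_of_nonneg_left ?_ (by positivity)
              rw [hX]
              apply mul_le_mul_of_nonneg_left ?_ (by positivity)
              apply mul_le_mul_of_nonneg_left hBpow (by positivity)
          _ = ((k : ℝ) + 1) ^ 4 * ((k : ℝ) + 2) ^ (k - 2) *
              (((n : ℝ) ^ (-1 + ε)) ^ (k + 1) * ((n : ℝ) ^ (k - 1) *
                ((n : ℝ) ^ ε) ^ (k - 2))) := by ring
          _ = ((k : ℝ) + 1) ^ 4 * ((k : ℝ) + 2) ^ (k - 2) *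
              (n : ℝ) ^ (2 * ((k : ℝ) * ε - 1) - ε) := by rw [hmain]
          _ ≤ ((k : ℝ) + 1) ^ 4 * ((k : ℝ) + 2) ^ k *
              (n : ℝ) ^ (2 * ((k : ℝ) * ε - 1) - ε) := by
              apply mul_le_mul_of_nonneg_right ?_ (by positivity)
              apply mul_le_mul_of_nonneg_left hpow2 (by positivity)
    _ = ((k : ℝ) + 1) ^ 4 * ((k : ℝ) + 2) ^ k * (n : ℝ) ^ (2 * ((k : ℝ) * ε - 1) - ε) := rfl
end
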